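/- Let T be a tree with threshold function t that admits a pervading link set with k external influencers. Then the minimum size of a pervading link set for T equals 1 + Σ_{v ∈ V(T)} (t(v) - 1). -/

import Mathlib

open Finset
open scoped Classical

set_option linter.unusedSectionVars false
set_option linter.unusedVariables false
set_option maxHeartbeats 1000000

/-- Threshold activation process: `act G t s j` is the set of nodes active at step `j`,
given link vector `s` (partial incentives from external influencers). -/
noncomputable def act {V : Type*} [Fintype V] (G : SimpleGraph V) (t s : V → ℕ) :
    ℕ → Finset V
  | 0 => Finset.univ.filter (fun v => t v ≤ s v)
  | (j+1) => act G t s j ∪ Finset.univ.filter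
      (fun v => t v ≤ s v + ((act G t s j).filter (fun u => G.Adj u v)).card)

/-- A link vector `s` is pervading for `(G, t)` with `k` external influencers if each node
receives at most `k` links and the process eventually activates every node. -/
def Pervading {V : Type*} [Fintype V] (G : SimpleGraph V) (t s : V → ℕ) (k : ℕ) : Prop :=
  (∀ v, s v ≤ k) ∧ ∃ j, act G t s j = Finset.univ

section Aux

variable {V : Type*} [Fintype V]

/-- in-degree of `v` under the orientation of `G` induced by position function `π`. -/
noncomputable def dd (G : SimpleGraph V) (π : V → ℕ) (v : V) : ℕ :=
  (Finset.univ.filter (fun u => G.Adj u v ∧ π u < π v)).card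

lemma dd_mono_pos (G : SimpleGraph V) {π π' : V → ℕ}
    (h : ∀ u v, π u < π v → π' u < π' v) (v : V) : dd G π v ≤ dd G π' v := by
  apply Finset.card_le_card
  intro u hu
  simp only [dd, Finset.mem_filter] at hu ⊢
  exact ⟨hu.1, hu.2.1, h _ _ hu.2.2⟩

lemma dd_congr (G : SimpleGraph V) {π π' : V → ℕ}
    (h : ∀ u v, G.Adj u v → (π u < π v ↔ π' u < π' v)) (v : V) : dd G π v = dd G π' v := by
  unfold dd
  congr 1
  apply Finset.filter_congr
  intro u _
  constructor
  · rintro ⟨ha, hlt⟩; exact ⟨ha, (h u v ha).1 hlt⟩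
  · rintro ⟨ha, hlt⟩; exact ⟨ha, (h u v ha).2 hlt⟩

/-- the set of ordered pairs realizing the in-degrees -/
noncomputable def ddP (G : SimpleGraph V) (π : V → ℕ) : Finset (V × V) :=
  Finset.univ.filter (fun q => G.Adj q.1 q.2 ∧ π q.1 < π q.2)

lemma sum_dd_eq_card_ddP (G : SimpleGraph V) (π : V → ℕ) :
    ∑ v, dd G π v = (ddP G π).card := by
  rw [Finset.card_eq_sum_card_fiberwise (f := Prod.snd) (t := Finset.univ)
    (fun q _ => Finset.mem_univ _)]
  apply Finset.sum_congr rfl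
  intro v _
  rw [dd]
  apply Finset.card_bij (fun u _ => (u, v))
  · intro u hu
    simp only [ddP, Finset.mem_filter] at hu ⊢
    exact ⟨⟨Finset.mem_univ _, hu.2.1, hu.2.2⟩, trivial⟩
  · intro a _ b _ hab
    exact congrArg Prod.fst hab
  · intro q hq
    simp only [ddP, Finset.mem_filter] at hq
    obtain ⟨⟨_, ha, hlt⟩, hsnd⟩ := hq
    refine ⟨q.1, ?_, ?_⟩
    · simp only [Finset.mem_filter, Finset.mem_univ, true_and]
      exact ⟨hsnd ▸ ha, hsnd ▸ hlt⟩
    · rw [← hsnd]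

lemma card_ddP_le (G : SimpleGraph V) (π : V → ℕ) :
    (ddP G π).card ≤ G.edgeFinset.card := by
  refine Finset.card_le_card_of_injOn (fun q : V × V => s(q.1, q.2)) ?_ ?_
  · intro q hq
    simp only [ddP, Finset.mem_coe, Finset.mem_filter] at hq
    simpa [SimpleGraph.mem_edgeFinset] using hq.2.1
  · intro q hq q' hq' he
    simp only [ddP, Finset.coe_filter, Set.mem_setOf_eq] at hq hq'
    rw [Sym2.mk_eq_mk_iff] at he
    rcases he with h | h
    · exact h
    · exfalso
      have h1 := hq.2.2
      have h2 := hq'.2.2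
      rw [show q.1 = q'.2 from congrArg Prod.fst h, show q.2 = q'.1 from congrArg Prod.snd h] at h1
      omega

lemma sum_dd_le (G : SimpleGraph V) (π : V → ℕ) :
    ∑ v, dd G π v ≤ G.edgeFinset.card := by
  rw [sum_dd_eq_card_ddP]; exact card_ddP_le G π

lemma sum_dd_eq (G : SimpleGraph V) {π : V → ℕ} (hπ : Function.Injective π) :
    ∑ v, dd G π v = G.edgeFinset.card := by
  rw [sum_dd_eq_card_ddP]
  apply le_antisymm (card_ddP_le G π)
  refine Finset.card_le_card_of_surjOn (fun q : V × V => s(q.1, q.2)) ?_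
  intro e he
  simp only [Finset.mem_coe] at he
  induction e with
  | _ u v =>
    rw [SimpleGraph.mem_edgeFinset, SimpleGraph.mem_edgeSet] at he
    have hne : π u ≠ π v := fun h => he.ne (hπ h)
    rcases hne.lt_or_gt with h | h
    · refine ⟨(u, v), ?_, rfl⟩
      simp only [Finset.mem_coe, ddP, Finset.mem_filter, Finset.mem_univ, true_and]
      exact ⟨he, h⟩
    · refine ⟨(v, u), ?_, Sym2.eq_swap⟩
      simp only [Finset.mem_coe, ddP, Finset.mem_filter, Finset.mem_univ, true_and]
      exact ⟨he.symm, h⟩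

lemma act_zero (G : SimpleGraph V) (t s : V → ℕ) :
    act G t s 0 = Finset.univ.filter (fun v => t v ≤ s v) := rfl

lemma act_succ (G : SimpleGraph V) (t s : V → ℕ) (j : ℕ) :
    act G t s (j+1) = act G t s j ∪ Finset.univ.filter
      (fun v => t v ≤ s v + ((act G t s j).filter (fun u => G.Adj u v)).card) := rfl

lemma act_mono (G : SimpleGraph V) (t s : V → ℕ) : Monotone (act G t s) := by
  apply monotone_nat_of_le_succ
  intro j
  rw [act_succ]
  exact subset_union_left

/-- any position function `π` yields a pervading vector `t - dd`. -/
lemma pervading_of_pi (G : SimpleGraph V) (t : V → ℕ) (k : ℕ) (π : V → ℕ)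
    (hcap : ∀ v, t v - dd G π v ≤ k) :
    Pervading G t (fun v => t v - dd G π v) k := by
  set s : V → ℕ := fun v => t v - dd G π v with hs
  refine ⟨hcap, ?_⟩
  have key : ∀ n (v : V), π v ≤ n → v ∈ act G t s n := by
    intro n
    induction n with
    | zero =>
      intro v hv
      have hdd : dd G π v = 0 := by
        rw [dd, Finset.card_eq_zero, Finset.filter_eq_empty_iff]
        intro u _
        rintro ⟨-, hlt⟩
        omega
      rw [act_zero, Finset.mem_filter]
      exact ⟨Finset.mem_univ _, by simp [hs, hdd]⟩
    | succ m ih =>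
      intro v hv
      rcases Nat.lt_or_ge (π v) (m+1) with h | h
      · exact act_mono G t s (Nat.le_succ m) (ih v (by omega))
      · have hπv : π v = m + 1 := le_antisymm hv h
        rw [act_succ]
        apply Finset.mem_union_right
        rw [Finset.mem_filter]
        refine ⟨Finset.mem_univ _, ?_⟩
        have hsub : Finset.univ.filter (fun u => G.Adj u v ∧ π u < π v) ⊆
            (act G t s m).filter (fun u => G.Adj u v) := by
          intro u hu
          rw [Finset.mem_filter] at hu ⊢
          exact ⟨ih u (by omega), hu.2.1⟩
        have hcard : dd G π v ≤ ((act G t s m).filter (fun u => G.Adj u v)).card :=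
          Finset.card_le_card hsub
        have : t v ≤ s v + dd G π v := by
          simp only [hs]
          omega
        omega
  refine ⟨Finset.univ.sup π, ?_⟩
  rw [Finset.eq_univ_iff_forall]
  intro v
  exact key _ v (Finset.le_sup (Finset.mem_univ v))

/-- from a pervading vector, extract activation times and the pointwise inequality. -/
lemma exists_tau (G : SimpleGraph V) (t s : V → ℕ) (k : ℕ) (h : Pervading G t s k) :
    ∃ τ : V → ℕ, ∀ v, t v ≤ s v + dd G τ v := by
  obtain ⟨-, j, hj⟩ := h
  have hex : ∀ v : V, ∃ n, v ∈ act G t s n := fun v => ⟨j, by rw [hj]; exact mem_univ v⟩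
  set τ : V → ℕ := fun v => Nat.find (hex v) with hτ
  refine ⟨τ, fun v => ?_⟩
  have hmem : v ∈ act G t s (τ v) := Nat.find_spec (hex v)
  rcases Nat.eq_zero_or_pos (τ v) with h0 | hpos
  · rw [h0, act_zero, Finset.mem_filter] at hmem
    omega
  · obtain ⟨m, hm⟩ : ∃ m, τ v = m + 1 := ⟨τ v - 1, by omega⟩
    rw [hm, act_succ, Finset.mem_union] at hmem
    rcases hmem with hmem | hmem
    · exact absurd hmem (Nat.find_min (hex v) (show m < τ v by omega))
    · rw [Finset.mem_filter] at hmem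
      have hsub : (act G t s m).filter (fun u => G.Adj u v) ⊆
          Finset.univ.filter (fun u => G.Adj u v ∧ τ u < τ v) := by
        intro u hu
        rw [Finset.mem_filter] at hu ⊢
        refine ⟨Finset.mem_univ _, hu.2, ?_⟩
        have : τ u ≤ m := Nat.find_le hu.1
        omega
      have := Finset.card_le_card hsub
      rw [dd]
      omega

/-- a pervading vector must fully pay for some vertex, hence `1 ≤ k`. -/
lemma one_le_k (G : SimpleGraph V) (t s : V → ℕ) (k : ℕ) [Nonempty V]
    (ht : ∀ v, 1 ≤ t v) (h : Pervading G t s k) : 1 ≤ k := by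
  obtain ⟨hcap, j, hj⟩ := h
  by_contra hk
  have hk0 : k = 0 := by omega
  have hs0 : ∀ v, s v = 0 := fun v => by have := hcap v; omega
  have hempty : ∀ n, act G t s n = ∅ := by
    intro n
    induction n with
    | zero =>
      rw [act_zero, Finset.filter_eq_empty_iff]
      intro v _
      have := ht v; have := hs0 v; omega
    | succ m ih =>
      rw [act_succ, ih, Finset.empty_union, Finset.filter_eq_empty_iff]
      intro v _
      rw [Finset.filter_empty, Finset.card_empty]
      have := ht v; have := hs0 v; omega
  have := hempty j
  rw [hj] at this
  exact (Finset.univ_nonempty).ne_empty this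

open SimpleGraph Walk in
lemma concat_isPath {G : SimpleGraph V} {u x w : V} {p : G.Walk u x}
    (hp : p.IsPath) (hw : G.Adj x w) (hws : w ∉ p.support) : (p.concat hw).IsPath := by
  rw [← Walk.isPath_reverse_iff, Walk.reverse_concat]
  apply hp.reverse.cons
  rwa [Walk.support_reverse, List.mem_reverse]

lemma exists_leaf (G : SimpleGraph V) (hac : G.IsAcyclic) (he : G.edgeFinset.Nonempty) :
    ∃ x y : V, G.neighborFinset x = {y} := by
  classical
  obtain ⟨e, hee⟩ := he
  induction e with
  | _ u₀ v₀ =>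
  rw [SimpleGraph.mem_edgeFinset, SimpleGraph.mem_edgeSet] at hee
  -- maximal path starting at u₀
  haveI : Nonempty ((w : V) × G.Path u₀ w) := ⟨⟨u₀, SimpleGraph.Path.nil⟩⟩
  obtain ⟨⟨x, p⟩, hmax⟩ := Finite.exists_max
    (fun q : Σ w : V, G.Path u₀ w => q.2.1.length)
  have hlen : 1 ≤ p.1.length := by
    have := hmax ⟨v₀, SimpleGraph.Path.singleton hee⟩
    simpa [SimpleGraph.Path.singleton] using this
  -- decompose p as q₀.concat h'
  obtain ⟨y, q₀, h', hpeq⟩ : ∃ (y : V) (q₀ : G.Walk u₀ y) (h' : G.Adj y x),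
      p.1 = q₀.concat h' := by
    cases hp : p.1 with
    | nil => rw [hp] at hlen; simp at hlen
    | cons h q => exact SimpleGraph.Walk.exists_cons_eq_concat h q
  refine ⟨x, y, ?_⟩
  have key : ∀ w, G.Adj x w → w = y := by
    intro w hw
    -- w must be on the support of p
    have hsup : w ∈ p.1.support := by
      by_contra hns
      have hpath : (p.1.concat hw).IsPath := concat_isPath p.2 hw hns
      have := hmax ⟨w, ⟨p.1.concat hw, hpath⟩⟩
      simp only [SimpleGraph.Walk.length_concat] at this
      omega
    have hwx : w ≠ x := fun hh => (G.irrefl (hh ▸ hw)).elim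
    -- take the initial segment up to w
    set q : G.Walk u₀ w := p.1.takeUntil w hsup with hq
    have hqpath : q.IsPath := p.2.takeUntil hsup
    have hxq : x ∉ q.support := by
      intro hxq
      have hspec := p.1.take_spec hsup
      have hnodup := p.2.support_nodup
      rw [← hspec, SimpleGraph.Walk.support_append] at hnodup
      have hdisj := List.disjoint_of_nodup_append hnodup
      have hxd : x ∈ (p.1.dropUntil w hsup).support.tail := by
        cases hd : p.1.dropUntil w hsup with
        | nil => exact absurd rfl hwx
        | cons hadj d₂ =>
          rw [SimpleGraph.Walk.support_cons]
          exact SimpleGraph.Walk.end_mem_support d₂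
      exact hdisj hxq hxd
    have hq'path : (q.concat hw.symm).IsPath := concat_isPath hqpath hw.symm hxq
    have huniq := (SimpleGraph.isAcyclic_iff_path_unique.mp hac)
      ⟨q.concat hw.symm, hq'path⟩ ⟨p.1, p.2⟩
    have hweq : q.concat hw.symm = q₀.concat h' := by
      have := congrArg Subtype.val huniq
      simpa [hpeq] using this
    obtain ⟨hv, -⟩ := SimpleGraph.Walk.concat_inj hweq
    exact hv
  ext z
  simp only [SimpleGraph.mem_neighborFinset, Finset.mem_singleton]
  constructor
  · exact fun hz => key z hz
  · rintro rfl; exact h'.symm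



section leafdel

variable {G : SimpleGraph V} {x p : V} (hxp : G.neighborFinset x = {p})

lemma adj_x_iff (hxp : G.neighborFinset x = {p}) : ∀ v, G.Adj x v ↔ v = p := by
  intro v
  rw [← SimpleGraph.mem_neighborFinset, hxp, Finset.mem_singleton]

lemma adj_xp (hxp : G.neighborFinset x = {p}) : G.Adj x p := (adj_x_iff hxp p).2 rfl

lemma ne_xp (hxp : G.neighborFinset x = {p}) : x ≠ p := (adj_xp hxp).ne

lemma del_adj (hxp : G.neighborFinset x = {p}) (u v : V) :
    (G.deleteEdges {s(x,p)}).Adj u v ↔ G.Adj u v ∧ ¬((u = x ∧ v = p) ∨ (u = p ∧ v = x)) := by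
  rw [SimpleGraph.deleteEdges_adj]
  simp only [Set.mem_singleton_iff, Sym2.eq_iff]

lemma del_isolated (hxp : G.neighborFinset x = {p}) (v : V) :
    ¬ (G.deleteEdges {s(x,p)}).Adj x v ∧ ¬ (G.deleteEdges {s(x,p)}).Adj v x := by
  constructor
  · rw [del_adj hxp]
    rintro ⟨ha, hn⟩
    exact hn (Or.inl ⟨rfl, (adj_x_iff hxp v).1 ha⟩)
  · rw [del_adj hxp]
    rintro ⟨ha, hn⟩
    exact hn (Or.inr ⟨(adj_x_iff hxp v).1 ha.symm, rfl⟩)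

lemma dd_del_other (hxp : G.neighborFinset x = {p}) (π : V → ℕ) (v : V)
    (hvx : v ≠ x) (hvp : v ≠ p) : dd (G.deleteEdges {s(x,p)}) π v = dd G π v := by
  unfold dd
  congr 1
  ext u
  simp only [Finset.mem_filter, Finset.mem_univ, true_and]
  rw [del_adj hxp]
  constructor
  · rintro ⟨⟨ha, -⟩, hlt⟩; exact ⟨ha, hlt⟩
  · rintro ⟨ha, hlt⟩
    refine ⟨⟨ha, ?_⟩, hlt⟩
    rintro (⟨-, rfl⟩ | ⟨-, rfl⟩)
    · exact hvp rfl
    · exact hvx rfl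

lemma dd_del_p (hxp : G.neighborFinset x = {p}) (π : V → ℕ) :
    dd G π p = dd (G.deleteEdges {s(x,p)}) π p + (if π x < π p then 1 else 0) := by
  unfold dd
  have hset : (Finset.univ.filter (fun u => G.Adj u p ∧ π u < π p)) =
      (Finset.univ.filter (fun u => (G.deleteEdges {s(x,p)}).Adj u p ∧ π u < π p))
      ∪ (if π x < π p then {x} else ∅) := by
    ext u
    simp only [Finset.mem_filter, Finset.mem_univ, true_and, Finset.mem_union, del_adj hxp]
    by_cases hux : u = x
    · subst hux
      constructor
      · rintro ⟨ha, hlt⟩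
        right
        simp [hlt]
      · rintro (⟨⟨ha, hn⟩, hlt⟩ | hmem)
        · simp at hn
        · split at hmem
          next hcond => exact ⟨adj_xp hxp, hcond⟩
          next hcond => simp at hmem
    · constructor
      · rintro ⟨ha, hlt⟩
        left
        refine ⟨⟨ha, ?_⟩, hlt⟩
        rintro (⟨h1, -⟩ | ⟨rfl, h2⟩)
        · exact hux h1
        · exact (ne_xp hxp) h2.symm
      · rintro (⟨⟨ha, -⟩, hlt⟩ | hmem)
        · exact ⟨ha, hlt⟩
        · split at hmem
          · simp only [Finset.mem_singleton] at hmem; exact absurd hmem hux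
          · simp at hmem
  rw [hset, Finset.card_union_of_disjoint]
  · congr 1
    · congr 1; ext u; simp
    · split <;> simp
  · split
    · simp only [Finset.disjoint_singleton_right, Finset.mem_filter]
      rintro ⟨-, ha, -⟩
      exact (del_isolated hxp p).1 ha
    · exact Finset.disjoint_empty_right _
  
lemma dd_del_x (hxp : G.neighborFinset x = {p}) (π : V → ℕ) :
    dd G π x = (if π p < π x then 1 else 0) ∧ dd (G.deleteEdges {s(x,p)}) π x = 0 := by
  constructor
  · unfold dd
    have hset : (Finset.univ.filter (fun u => G.Adj u x ∧ π u < π x)) =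
        (if π p < π x then {p} else ∅) := by
      ext u
      simp only [Finset.mem_filter, Finset.mem_univ, true_and]
      constructor
      · rintro ⟨ha, hlt⟩
        have : u = p := (adj_x_iff hxp u).1 ha.symm
        subst this
        simp [hlt]
      · intro hmem
        split at hmem
        · simp only [Finset.mem_singleton] at hmem
          subst hmem
          exact ⟨(adj_xp hxp).symm, by assumption⟩
        · simp at hmem
    rw [hset]
    split <;> simp
  · unfold dd
    simp only [Finset.card_eq_zero, Finset.filter_eq_empty_iff]
    rintro u - ⟨ha, -⟩
    exact (del_isolated hxp u).2 ha

lemma del_card_edge (hxp : G.neighborFinset x = {p}) :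
    (G.deleteEdges {s(x,p)}).edgeFinset.card + 1 = G.edgeFinset.card := by
  have h1 : (G.deleteEdges {s(x,p)}).edgeFinset = G.edgeFinset.erase s(x,p) := by
    ext e
    simp only [SimpleGraph.mem_edgeFinset, SimpleGraph.edgeSet_deleteEdges, Set.mem_diff,
      Set.mem_singleton_iff, Finset.mem_erase, SimpleGraph.mem_edgeFinset]
    tauto
  rw [h1, Finset.card_erase_of_mem]
  · have : s(x,p) ∈ G.edgeFinset := by
      rw [SimpleGraph.mem_edgeFinset, SimpleGraph.mem_edgeSet]
      exact adj_xp hxp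
    have hpos : 0 < G.edgeFinset.card := Finset.card_pos.2 ⟨_, this⟩
    omega
  · rw [SimpleGraph.mem_edgeFinset, SimpleGraph.mem_edgeSet]
    exact adj_xp hxp

lemma del_acyclic (hac : G.IsAcyclic) : (G.deleteEdges {s(x,p)}).IsAcyclic := by
  intro v c hc
  exact hac (c.mapLe (SimpleGraph.deleteEdges_le _)) (hc.mapLe _)

end leafdel

lemma orient_exists (n : ℕ) : ∀ (G : SimpleGraph V) (t : V → ℕ) (k : ℕ),
    G.edgeFinset.card ≤ n → G.IsAcyclic → 1 ≤ k → (∀ v, 1 ≤ t v) →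
    (∃ π₀ : V → ℕ, Function.Injective π₀ ∧ ∀ v, t v ≤ k + dd G π₀ v) →
    ∃ π : V → ℕ, Function.Injective π ∧ ∀ v, dd G π v ≤ t v ∧ t v ≤ k + dd G π v := by
  induction n with
  | zero =>
    intro G t k hcard hac hk ht ⟨π₀, hinj, hinv⟩
    have hE : G.edgeFinset = ∅ := Finset.card_eq_zero.1 (Nat.le_zero.1 hcard)
    have hnoadj : ∀ u v : V, ¬ G.Adj u v := by
      intro u v ha
      have : s(u,v) ∈ G.edgeFinset := by
        rw [SimpleGraph.mem_edgeFinset, SimpleGraph.mem_edgeSet]; exact ha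
      rw [hE] at this
      exact absurd this (Finset.notMem_empty _)
    have hdd : ∀ (π : V → ℕ) (v : V), dd G π v = 0 := by
      intro π v
      rw [dd, Finset.card_eq_zero, Finset.filter_eq_empty_iff]
      rintro u - ⟨ha, -⟩
      exact hnoadj u v ha
    exact ⟨π₀, hinj, fun v => ⟨by rw [hdd]; omega, by rw [hdd]; have := hinv v; rwa [hdd] at this⟩⟩
  | succ N ih =>
    intro G t k hcard hac hk ht ⟨π₀, hinj, hinv⟩
    rcases Finset.eq_empty_or_nonempty G.edgeFinset with hE | hNE
    · -- no edges: same as base case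
      have hnoadj : ∀ u v : V, ¬ G.Adj u v := by
        intro u v ha
        have : s(u,v) ∈ G.edgeFinset := by
          rw [SimpleGraph.mem_edgeFinset, SimpleGraph.mem_edgeSet]; exact ha
        rw [hE] at this
        exact absurd this (Finset.notMem_empty _)
      have hdd : ∀ (π : V → ℕ) (v : V), dd G π v = 0 := by
        intro π v
        rw [dd, Finset.card_eq_zero, Finset.filter_eq_empty_iff]
        rintro u - ⟨ha, -⟩
        exact hnoadj u v ha
      exact ⟨π₀, hinj, fun v => ⟨by rw [hdd]; omega, by rw [hdd]; have := hinv v; rwa [hdd] at this⟩⟩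
    · obtain ⟨x, p, hxp⟩ := exists_leaf G hac hNE
      have hxadj : G.Adj x p := adj_xp hxp
      have hnexp : x ≠ p := ne_xp hxp
      have hcard' : (G.deleteEdges {s(x,p)}).edgeFinset.card ≤ N := by
        have := del_card_edge hxp
        omega
      have hac' : (G.deleteEdges {s(x,p)}).IsAcyclic := del_acyclic hac
      have hπ₀xp : π₀ x ≠ π₀ p := fun h => hnexp (hinj h)
      have hddx0 : dd G π₀ x = if π₀ p < π₀ x then 1 else 0 := (dd_del_x hxp π₀).1
      by_cases hdec : π₀ x < π₀ p ∧ 2 ≤ t p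
      · -- decrement branch: final edge oriented x → p, t p reduced
        set t' : V → ℕ := fun v => if v = x then min (t x) k else if v = p then t p - 1 else t v
          with ht'def
        have ht' : ∀ v, 1 ≤ t' v := by
          intro v
          simp only [ht'def]
          split
          · have := ht x; omega
          · split
            · omega
            · exact ht v
        have hddp : dd G π₀ p = dd (G.deleteEdges {s(x,p)}) π₀ p + 1 := by
          have := dd_del_p hxp π₀
          rwa [if_pos hdec.1] at this
        have hinv' : ∀ v, t' v ≤ k + dd (G.deleteEdges {s(x,p)}) π₀ v := by
          intro v
          simp only [ht'def]
          split
          · omega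
          · split
            next h1 h2 =>
              subst h2
              have h8 := hinv v
              omega
            · next h1 h2 =>
              rw [dd_del_other hxp π₀ v h1 h2]
              exact hinv v
        obtain ⟨π', hinj', hπ'⟩ := ih (G.deleteEdges {s(x,p)}) t' k (by convert hcard') hac' hk ht' ⟨π₀, hinj, hinv'⟩
        set π'' : V → ℕ := fun v => if v = x then 0 else π' v + 1 with hπ''def
        have hinj'' : Function.Injective π'' := by
          intro a b hab
          simp only [hπ''def] at hab
          by_cases ha : a = x <;> by_cases hb : b = x
          · rw [ha, hb]
          · rw [if_pos ha, if_neg hb] at hab; omega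
          · rw [if_neg ha, if_pos hb] at hab; omega
          · rw [if_neg ha, if_neg hb] at hab
            exact hinj' (by omega)
        have hcmp : ∀ v, dd (G.deleteEdges {s(x,p)}) π'' v = dd (G.deleteEdges {s(x,p)}) π' v := by
          intro v
          apply dd_congr
          intro a b hab
          have hax : a ≠ x := by
            intro h
            rw [h] at hab
            exact (del_isolated hxp b).1 hab
          have hbx : b ≠ x := by
            intro h
            rw [h] at hab
            exact (del_isolated hxp a).2 hab
          simp only [hπ''def, if_neg hax, if_neg hbx]
          omega
        have hdd_p : dd G π'' p = dd (G.deleteEdges {s(x,p)}) π' p + 1 := by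
          have h2 := dd_del_p hxp π''
          rw [hcmp] at h2
          rwa [if_pos (by simp only [hπ''def, if_pos rfl, if_neg (Ne.symm hnexp)]; omega)] at h2
        have hdd_x : dd G π'' x = 0 := by
          have := (dd_del_x hxp π'').1
          rwa [if_neg (by simp only [hπ''def, if_pos rfl, if_neg (Ne.symm hnexp)]; omega)] at this
        have hdd_o : ∀ v, v ≠ x → v ≠ p → dd G π'' v = dd (G.deleteEdges {s(x,p)}) π' v := by
          intro v hvx hvp
          rw [← dd_del_other hxp π'' v hvx hvp, hcmp]
        refine ⟨π'', hinj'', fun v => ?_⟩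
        by_cases hvx : v = x
        · subst hvx
          rw [hdd_x]
          have hx0 : dd G π₀ v = 0 := by
            rw [hddx0, if_neg (by omega)]
          have := hinv v
          rw [hx0] at this
          have := ht v
          omega
        · by_cases hvp : v = p
          · subst hvp
            rw [hdd_p]
            have ht'p : t' v = t v - 1 := by
              simp only [ht'def]
              rw [if_neg hvx]
              exact if_pos trivial
            have h7 := hπ' v
            rw [ht'p] at h7
            have h8 := hdec.2
            omega
          · rw [hdd_o v hvx hvp]
            have := hπ' v
            simp only [ht'def, if_neg hvx, if_neg hvp] at this
            exact this
      · -- no decrement: final edge oriented p → x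
        set t' : V → ℕ := fun v => if v = x then min (t x) k else t v with ht'def
        have ht' : ∀ v, 1 ≤ t' v := by
          intro v
          simp only [ht'def]
          split
          · have := ht x; omega
          · exact ht v
        have hinv' : ∀ v, t' v ≤ k + dd (G.deleteEdges {s(x,p)}) π₀ v := by
          intro v
          simp only [ht'def]
          split
          · omega
          · next hvx =>
            by_cases hvp : v = p
            · subst hvp
              rcases hπ₀xp.lt_or_gt with hlt | hlt
              · -- π₀ x < π₀ p together with ¬hdec forces t p ≤ 1, i.e. t p = 1
                have htp : t v = 1 := by
                  have h1 := ht v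
                  have : ¬ (2 ≤ t v) := fun h2 => hdec ⟨hlt, h2⟩
                  omega
                rw [htp]
                omega
              · have := dd_del_p hxp π₀
                rw [if_neg (by omega)] at this
                have h2 := hinv v
                omega
            · rw [dd_del_other hxp π₀ v hvx hvp]
              exact hinv v
        obtain ⟨π', hinj', hπ'⟩ := ih (G.deleteEdges {s(x,p)}) t' k (by convert hcard') hac' hk ht' ⟨π₀, hinj, hinv'⟩
        set π'' : V → ℕ := fun v => if v = x then (Finset.univ.sup π') + 1 else π' v with hπ''def
        have hsup : ∀ v : V, π' v ≤ Finset.univ.sup π' := fun v => Finset.le_sup (mem_univ v)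
        have hinj'' : Function.Injective π'' := by
          intro a b hab
          simp only [hπ''def] at hab
          by_cases ha : a = x <;> by_cases hb : b = x
          · rw [ha, hb]
          · rw [if_pos ha, if_neg hb] at hab; have := hsup b; omega
          · rw [if_neg ha, if_pos hb] at hab; have := hsup a; omega
          · rw [if_neg ha, if_neg hb] at hab
            exact hinj' hab
        have hcmp : ∀ v, dd (G.deleteEdges {s(x,p)}) π'' v = dd (G.deleteEdges {s(x,p)}) π' v := by
          intro v
          apply dd_congr
          intro a b hab
          have hax : a ≠ x := by
            intro h
            rw [h] at hab
            exact (del_isolated hxp b).1 hab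
          have hbx : b ≠ x := by
            intro h
            rw [h] at hab
            exact (del_isolated hxp a).2 hab
          simp only [hπ''def, if_neg hax, if_neg hbx]
        have hdd_p : dd G π'' p = dd (G.deleteEdges {s(x,p)}) π' p := by
          have h2 := dd_del_p hxp π''
          rw [hcmp] at h2
          rw [if_neg (by
            simp only [hπ''def, if_pos rfl, if_neg (Ne.symm hnexp)]
            have := hsup p
            omega)] at h2
          omega
        have hdd_x : dd G π'' x = 1 := by
          have := (dd_del_x hxp π'').1
          rwa [if_pos (by
            simp only [hπ''def, if_pos rfl, if_neg (Ne.symm hnexp)]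
            have := hsup p
            omega)] at this
        have hdd_o : ∀ v, v ≠ x → v ≠ p → dd G π'' v = dd (G.deleteEdges {s(x,p)}) π' v := by
          intro v hvx hvp
          rw [← dd_del_other hxp π'' v hvx hvp, hcmp]
        refine ⟨π'', hinj'', fun v => ?_⟩
        by_cases hvx : v = x
        · subst hvx
          rw [hdd_x]
          have h1 := hinv v
          rw [hddx0] at h1
          have h2 := ht v
          constructor
          · omega
          · split at h1 <;> omega
        · by_cases hvp : v = p
          · subst hvp
            rw [hdd_p]
            have := hπ' v
            simp only [ht'def, if_neg hvx] at this
            exact this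
          · rw [hdd_o v hvx hvp]
            have := hπ' v
            simp only [ht'def, if_neg hvx] at this
            exact this

end Aux

theorem tree_min_links_eq {V : Type*} [Fintype V]
    (G : SimpleGraph V) (hT : G.IsTree) (t : V → ℕ) (k : ℕ)
    (ht : ∀ u, 1 ≤ t u)
    (hfeas : ∃ s, Pervading G t s k) :
    IsLeast {m : ℕ | ∃ s : V → ℕ, Pervading G t s k ∧ ∑ u, s u = m}
      (1 + ∑ u, (t u - 1)) := by
  haveI : Nonempty V := hT.isConnected.nonempty
  have hE : G.edgeFinset.card + 1 = Fintype.card V := hT.card_edgeFinset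
  have hsum_t : ∑ v, t v = ∑ v, (t v - 1) + Fintype.card V := by
    have h1 : ∀ v ∈ Finset.univ, t v = (t v - 1) + 1 := by
      intro v _
      have := ht v
      omega
    rw [Finset.sum_congr rfl h1, Finset.sum_add_distrib]
    simp
  constructor
  · -- membership : construct an optimal pervading vector
    obtain ⟨s₀, hs₀⟩ := hfeas
    have hk : 1 ≤ k := one_le_k G t s₀ k ht hs₀
    obtain ⟨τ, hτ⟩ := exists_tau G t s₀ k hs₀
    set Nc := Fintype.card V with hNc
    set π₀ : V → ℕ := fun v => τ v * Nc + ((Fintype.equivFin V) v : ℕ) with hπ₀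
    have hmono : ∀ u v, τ u < τ v → π₀ u < π₀ v := by
      intro u v huv
      have h1 : (τ u + 1) * Nc ≤ τ v * Nc := Nat.mul_le_mul_right Nc (by omega)
      rw [Nat.add_mul, one_mul] at h1
      have h2 : ((Fintype.equivFin V) u : ℕ) < Nc := ((Fintype.equivFin V) u).is_lt
      simp only [hπ₀]
      omega
    have hπ₀inj : Function.Injective π₀ := by
      intro a b hab
      have hτab : τ a = τ b := by
        rcases Nat.lt_trichotomy (τ a) (τ b) with h | h | h
        · exact absurd hab (Nat.ne_of_lt (hmono a b h))
        · exact h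
        · exact absurd hab.symm (Nat.ne_of_lt (hmono b a h))
      simp only [hπ₀, hτab] at hab
      have : ((Fintype.equivFin V) a : ℕ) = ((Fintype.equivFin V) b : ℕ) := by omega
      exact (Fintype.equivFin V).injective (Fin.ext this)
    have hinv : ∀ v, t v ≤ k + dd G π₀ v := by
      intro v
      have h1 := hτ v
      have h2 : dd G τ v ≤ dd G π₀ v := dd_mono_pos G hmono v
      have h3 := (hs₀.1) v
      omega
    obtain ⟨π, hπinj, hπ⟩ := orient_exists (G.edgeFinset.card) G t k le_rfl
      hT.IsAcyclic hk ht ⟨π₀, hπ₀inj, hinv⟩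
    have hcap : ∀ v, t v - dd G π v ≤ k := by
      intro v
      have := (hπ v).2
      omega
    refine ⟨fun v => t v - dd G π v, pervading_of_pi G t k π hcap, ?_⟩
    show ∑ u, (t u - dd G π u) = 1 + ∑ u, (t u - 1)
    have hsd : ∑ v, dd G π v = G.edgeFinset.card := sum_dd_eq G hπinj
    have hsplit : ∑ v, (t v - dd G π v) + ∑ v, dd G π v = ∑ v, t v := by
      rw [← Finset.sum_add_distrib]
      apply Finset.sum_congr rfl
      intro v _
      have := (hπ v).1
      omega
    omega
  · -- lower bound
    rintro m ⟨s, hs, rfl⟩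
    obtain ⟨τ, hτ⟩ := exists_tau G t s k hs
    have h1 : ∑ v, t v ≤ ∑ v, (s v + dd G τ v) := Finset.sum_le_sum (fun v _ => hτ v)
    rw [Finset.sum_add_distrib] at h1
    have h2 : ∑ v, dd G τ v ≤ G.edgeFinset.card := sum_dd_le G τ
    omega
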